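/- Let α ∈ (0,1) and t > 0. Let y : [0,t] → ℝ be absolutely continuous with integrable derivative y′ such that g_{α/2} ∗ y′ ∈ L²(0,t). Then for every s ∈ [0,t], |y(s) − y(0)| ≤ (s^{(1−α)/2} / (Γ(1−α/2) · √(1−α))) · ‖g_{α/2} ∗ y′‖_{L²(0,s)}; in particular sup_{s∈[0,t]} |y(s) − y(0)| ≤ (t^{(1−α)/2} / (Γ(1−α/2) · √(1−α))) · ‖g_{α/2} ∗ y′‖_{L²(0,t)}. -/

import Mathlib

open MeasureTheory Real Set

/-- Laplace convolution on (0,t): (f ∗ g)(t) = ∫₀ᵗ f(t−s) g(s) ds. -/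
noncomputable def conv (f g : ℝ → ℝ) (t : ℝ) : ℝ := ∫ s in Set.Ioc 0 t, f (t - s) * g s

/-- Abel kernel g_α(t) = t^{α−1}/Γ(α). -/
noncomputable def abel (α t : ℝ) : ℝ := t ^ (α - 1) / Real.Gamma α

open intervalIntegral
private lemma measurable_rpow_const (c : ℝ) : Measurable (fun x : ℝ => x ^ c) :=
  measurable_of_continuousOn_compl_singleton 0
    (fun x hx => (Real.continuousAt_rpow_const x c (Or.inl hx)).continuousWithinAt)

private lemma betaKer_intervalIntegrable {a b : ℝ} (ha : 0 < a) (ha1 : a < 1) (hb : 0 < b) :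
    IntervalIntegrable (fun w => w ^ (a-1) * (b-w) ^ (-a)) volume 0 b := by
  have h1 : IntervalIntegrable (fun w => w ^ (a-1) * (b-w) ^ (-a)) volume 0 (b/2) := by
    refine (intervalIntegrable_rpow' (by linarith)).mul_continuousOn ?_
    refine ContinuousOn.rpow_const (by fun_prop) fun x hx => Or.inl ?_
    rw [uIcc_of_le (by linarith)] at hx
    intro h; nlinarith [hx.1, hx.2]
  have h2 : IntervalIntegrable (fun w => w ^ (a-1) * (b-w) ^ (-a)) volume (b/2) b := by
    have base : IntervalIntegrable (fun x : ℝ => x ^ (-a)) volume 0 (b/2) :=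
      intervalIntegrable_rpow' (by linarith)
    have comp := base.comp_sub_left b
    rw [show b - b/2 = b/2 by ring] at comp
    refine IntervalIntegrable.continuousOn_mul ?_ ?_
    · simpa using comp.symm
    · refine ContinuousOn.rpow_const (by fun_prop) fun x hx => Or.inl ?_
      rw [uIcc_of_le (by linarith)] at hx
      intro h; nlinarith [hx.1, hx.2]
  exact h1.trans h2

private lemma betaKer_integral {a b : ℝ} (ha : 0 < a) (ha1 : a < 1) (hb : 0 < b) :
    ∫ w in (0:ℝ)..b, w ^ (a-1) * (b-w) ^ (-a) = Real.Gamma a * Real.Gamma (1-a) := by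
  have hB : Complex.betaIntegral a (1-a) = (Real.Gamma a * Real.Gamma (1-a) : ℝ) := by
    have := Complex.Gamma_mul_Gamma_eq_betaIntegral (s := (a:ℂ)) (t := 1-(a:ℂ))
      (by simpa using ha) (by simp [Complex.sub_re]; linarith)
    rw [show (a:ℂ) + (1 - a) = 1 by ring, Complex.Gamma_one, one_mul] at this
    rw [← this, show ((1:ℂ) - a) = ((1-a:ℝ):ℂ) by push_cast; ring, Complex.Gamma_ofReal,
      Complex.Gamma_ofReal]
    push_cast; ring
  have hscaled := Complex.betaIntegral_scaled (a:ℂ) (1-(a:ℂ)) hb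
  rw [show (a:ℂ) + (1 - a) - 1 = 0 by ring, Complex.cpow_zero, one_mul, hB] at hscaled
  have heq : EqOn (fun w : ℝ => ((w ^ (a-1) * (b-w) ^ (-a) : ℝ) : ℂ))
      (fun w : ℝ => (w:ℂ) ^ ((a:ℂ) - 1) * ((b:ℂ) - w) ^ ((1 - (a:ℂ)) - 1)) (uIcc 0 b) := by
    intro w hw
    rw [uIcc_of_le hb.le] at hw
    simp only [Complex.ofReal_mul]
    rw [Complex.ofReal_cpow hw.1, Complex.ofReal_cpow (by linarith [hw.2] : (0:ℝ) ≤ b - w)]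
    push_cast; ring_nf
  have : ((∫ w in (0:ℝ)..b, w ^ (a-1) * (b-w) ^ (-a) : ℝ) : ℂ)
      = ((Real.Gamma a * Real.Gamma (1-a) : ℝ) : ℂ) := by
    rw [← intervalIntegral.integral_ofReal, intervalIntegral.integral_congr heq, hscaled]
  exact_mod_cast this

private lemma ker_integrableOn {a u s : ℝ} (ha : 0 < a) (ha1 : a < 1) (hus : u < s) :
    IntegrableOn (fun r => (r-u) ^ (a-1) * (s-r) ^ (-a)) (Ioc u s) := by
  have h := (betaKer_intervalIntegrable ha ha1 (b := s - u) (by linarith)).comp_sub_right u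
  rw [zero_add, sub_add_cancel] at h
  have h' : (fun x => (x - u) ^ (a-1) * ((s - u) - (x - u)) ^ (-a))
      = fun x => (x-u) ^ (a-1) * (s-x) ^ (-a) := by
    funext x; rw [show (s-u) - (x-u) = s - x by ring]
  rw [h'] at h
  exact (intervalIntegrable_iff_integrableOn_Ioc_of_le hus.le).mp h

private lemma ker_integral {a u s : ℝ} (ha : 0 < a) (ha1 : a < 1) (hus : u < s) :
    ∫ r in Ioc u s, (r-u) ^ (a-1) * (s-r) ^ (-a) = Real.Gamma a * Real.Gamma (1-a) := by
  rw [← intervalIntegral.integral_of_le hus.le]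
  have h := intervalIntegral.integral_comp_sub_right
    (a := u) (b := s) (fun w => w ^ (a-1) * ((s-u) - w) ^ (-a)) u
  simp only [sub_self] at h
  have h' : (fun x => (x - u) ^ (a-1) * ((s - u) - (x - u)) ^ (-a))
      = fun x => (x-u) ^ (a-1) * (s-x) ^ (-a) := by
    funext x; rw [show (s-u) - (x-u) = s - x by ring]
  calc ∫ r in u..s, (r-u) ^ (a-1) * (s-r) ^ (-a)
      = ∫ r in u..s, (fun w => w ^ (a-1) * ((s-u) - w) ^ (-a)) (r - u) := by
        rw [show (fun r => (fun w => w ^ (a-1) * ((s-u) - w) ^ (-a)) (r - u))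
          = fun x => (x-u) ^ (a-1) * (s-x) ^ (-a) from h']
    _ = ∫ w in (0:ℝ)..(s-u), w ^ (a-1) * ((s-u)-w) ^ (-a) := h
    _ = Real.Gamma a * Real.Gamma (1-a) := betaKer_integral ha ha1 (by linarith)

private lemma abelKer_integrableOn {a u s : ℝ} (ha : 0 < a) (ha1 : a < 1) (hus : u < s) :
    IntegrableOn (fun r => abel a (r-u) * abel (1-a) (s-r)) (Ioc u s) := by
  have h : IntegrableOn (fun r => ((r-u) ^ (a-1) * (s-r) ^ (-a)) / (Real.Gamma a * Real.Gamma (1-a))) (Ioc u s) :=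
    (ker_integrableOn ha ha1 hus).div_const (Real.Gamma a * Real.Gamma (1-a))
  refine IntegrableOn.congr_fun h (fun r hr => ?_) measurableSet_Ioc
  simp only [abel, show (1-a) - 1 = -a by ring]
  ring

private lemma abelKer_integral {a u s : ℝ} (ha : 0 < a) (ha1 : a < 1) (hus : u < s) :
    ∫ r in Ioc u s, abel a (r-u) * abel (1-a) (s-r) = 1 := by
  have hG : 0 < Real.Gamma a * Real.Gamma (1-a) :=
    mul_pos (Real.Gamma_pos_of_pos ha) (Real.Gamma_pos_of_pos (by linarith))
  have : ∀ r, abel a (r-u) * abel (1-a) (s-r)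
      = ((r-u) ^ (a-1) * (s-r) ^ (-a)) / (Real.Gamma a * Real.Gamma (1-a)) := by
    intro r; simp only [abel, show (1-a) - 1 = -a by ring]; ring
  simp_rw [this, MeasureTheory.integral_div, ker_integral ha ha1 hus, div_self hG.ne']

private lemma Ksq_integrableOn {a s : ℝ} (ha : 0 < a) (ha2 : 2*a < 1) (hs : 0 < s) :
    IntegrableOn (fun r => (abel (1-a) (s-r))^2) (Ioc 0 s) := by
  have base : IntervalIntegrable (fun x : ℝ => x ^ (-(2*a))) volume 0 s :=
    intervalIntegrable_rpow' (by linarith)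
  have comp := base.comp_sub_left s
  simp only [sub_zero, sub_self] at comp
  have h : IntegrableOn (fun r => (s-r) ^ (-(2*a)) / (Real.Gamma (1-a))^2) (Ioc 0 s) :=
    ((intervalIntegrable_iff_integrableOn_Ioc_of_le hs.le).mp comp.symm).div_const _
  refine IntegrableOn.congr_fun h (fun r hr => ?_) measurableSet_Ioc
  simp only [abel, show (1-a) - 1 = -a by ring, div_pow]
  rw [← Real.rpow_natCast ((s-r) ^ (-a)) 2, ← Real.rpow_mul (by linarith [hr.2] : (0:ℝ) ≤ s - r),
    show -a * ((2:ℕ):ℝ) = -(2*a) by push_cast; ring]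

private lemma Ksq_integral {a s : ℝ} (ha : 0 < a) (ha2 : 2*a < 1) (hs : 0 < s) :
    ∫ r in Ioc 0 s, (abel (1-a) (s-r))^2
      = s ^ (1-2*a) / ((1-2*a) * (Real.Gamma (1-a))^2) := by
  have hval : ∫ r in Ioc 0 s, (s-r) ^ (-(2*a)) = s ^ (1-2*a) / (1-2*a) := by
    rw [← intervalIntegral.integral_of_le hs.le]
    have h := intervalIntegral.integral_comp_sub_left (a := 0) (b := s)
      (fun x : ℝ => x ^ (-(2*a))) s
    simp only [sub_zero, sub_self] at h
    rw [h, integral_rpow (Or.inl (by linarith))]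
    rw [Real.zero_rpow (by intro h'; nlinarith), show -(2*a) + 1 = 1 - 2*a by ring]
    ring
  have hcongr : ∀ r ∈ Ioc 0 s, (abel (1-a) (s-r))^2
      = (s-r) ^ (-(2*a)) / (Real.Gamma (1-a))^2 := by
    intro r hr
    simp only [abel, show (1-a) - 1 = -a by ring, div_pow]
    rw [← Real.rpow_natCast ((s-r) ^ (-a)) 2, ← Real.rpow_mul (by linarith [hr.2] : (0:ℝ) ≤ s - r),
      show -a * ((2:ℕ):ℝ) = -(2*a) by push_cast; ring]
  rw [setIntegral_congr_fun measurableSet_Ioc hcongr, MeasureTheory.integral_div, hval, div_div]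

set_option maxHeartbeats 1000000 in
private lemma key_identity {a s : ℝ} (ha : 0 < a) (ha1 : a < 1) (hs : 0 < s)
    {y' : ℝ → ℝ} (hy' : IntegrableOn y' (Ioc 0 s)) :
    ∫ r in Ioc 0 s, y' r = ∫ r in Ioc 0 s, abel (1-a) (s-r) * conv (abel a) y' r := by
  set μ : Measure ℝ := volume.restrict (Ioc 0 s) with hμ
  set g : ℝ → ℝ → ℝ := fun r u => if u < r then abel a (r-u) * abel (1-a) (s-r) else 0 with hg
  set f : ℝ → ℝ → ℝ := fun r u => g r u * y' u with hf
  -- nonnegativity of g for r ≤ s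
  have hgnn : ∀ r u, r ≤ s → 0 ≤ g r u := by
    intro r u hrs
    simp only [hg]
    split_ifs with h
    · exact mul_nonneg (div_nonneg (Real.rpow_nonneg (by linarith) _)
        (Real.Gamma_pos_of_pos ha).le) (div_nonneg (Real.rpow_nonneg (by linarith) _)
        (Real.Gamma_pos_of_pos (by linarith)).le)
    · exact le_refl 0
  -- ae membership
  have haeIoo : ∀ᵐ u ∂μ, u ∈ Ioo 0 s := by
    have h1 : ∀ᵐ u ∂μ, u ∈ Ioc 0 s := ae_restrict_mem measurableSet_Ioc
    have h2 : ∀ᵐ (u : ℝ) ∂μ, u ≠ s := by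
      refine ae_restrict_of_ae ?_
      rw [ae_iff]
      simpa [Set.setOf_eq_eq_singleton] using measure_singleton s
    filter_upwards [h1, h2] with u hu hne
    exact ⟨hu.1, lt_of_le_of_ne hu.2 hne⟩
  -- g (· , u) rewrite as indicator
  have hgind : ∀ u, (fun r => g r u) = (Ioi u).indicator
      (fun r => abel a (r-u) * abel (1-a) (s-r)) := by
    intro u; funext r
    simp only [hg, Set.indicator_apply, mem_Ioi]
  -- integral of g slices in r
  have hgint : ∀ u ∈ Ioo 0 s, ∫ r, g r u ∂μ = 1 := by
    intro u hu
    rw [hgind u, hμ, setIntegral_indicator measurableSet_Ioi,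
      show Ioc 0 s ∩ Ioi u = Ioc u s by
        ext x; simp only [mem_inter_iff, mem_Ioc, mem_Ioi]
        constructor
        · rintro ⟨⟨_, h2⟩, h3⟩; exact ⟨h3, h2⟩
        · rintro ⟨h1, h2⟩; exact ⟨⟨hu.1.trans h1, h2⟩, h1⟩]
    exact abelKer_integral ha ha1 hu.2
  have hgintOn : ∀ u ∈ Ioo 0 s, Integrable (fun r => g r u) μ := by
    intro u hu
    rw [hgind u, hμ, integrable_indicator_iff measurableSet_Ioi, IntegrableOn,
      Measure.restrict_restrict measurableSet_Ioi,
      show Ioi u ∩ Ioc 0 s = Ioc u s by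
        ext x; simp only [mem_inter_iff, mem_Ioc, mem_Ioi]
        constructor
        · rintro ⟨h3, _, h2⟩; exact ⟨h3, h2⟩
        · rintro ⟨h1, h2⟩; exact ⟨h1, hu.1.trans h1, h2⟩]
    exact abelKer_integrableOn ha ha1 hu.2
  -- measurability
  have hrpow : ∀ c : ℝ, Measurable (fun x : ℝ => x ^ c) := measurable_rpow_const
  have hmk : Measurable (fun p : ℝ × ℝ => abel a (p.1 - p.2) * abel (1-a) (s - p.1)) := by
    simp only [abel]
    exact (((hrpow (a-1)).comp (measurable_fst.sub measurable_snd)).div_const _).mul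
      (((hrpow ((1-a)-1)).comp (measurable_const.sub measurable_fst)).div_const _)
  have hsm : AEStronglyMeasurable (Function.uncurry f) (μ.prod μ) := by
    have h1 : Measurable (fun p : ℝ × ℝ => g p.1 p.2) := by
      simp only [hg]
      exact Measurable.ite (measurableSet_lt measurable_snd measurable_fst) hmk measurable_const
    have h2 : AEStronglyMeasurable (fun p : ℝ × ℝ => y' p.2) (μ.prod μ) :=
      hy'.aestronglyMeasurable.comp_snd
    exact (h1.aestronglyMeasurable.mul h2)
  -- integrability of uncurry f
  have hint : Integrable (Function.uncurry f) (μ.prod μ) := by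
    rw [integrable_prod_iff' hsm]
    constructor
    · filter_upwards [haeIoo] with u hu
      have huncurry : (fun r => Function.uncurry f (r, u)) = fun r => g r u * y' u := by
        funext r; simp only [Function.uncurry_apply_pair, hf]
      rw [huncurry]
      exact (hgintOn u hu).mul_const _
    · refine (Integrable.congr (hy'.norm) ?_)
      filter_upwards [haeIoo] with u hu
      have hcong : ∫ r, ‖Function.uncurry f (r, u)‖ ∂μ = ∫ r, g r u * ‖y' u‖ ∂μ := by
        refine integral_congr_ae ?_
        filter_upwards [ae_restrict_mem measurableSet_Ioc] with r hr
        simp only [Function.uncurry, hf, norm_mul]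
        rw [Real.norm_of_nonneg (hgnn r u hr.2)]
      rw [hcong, MeasureTheory.integral_mul_const, hgint u hu, one_mul]
  have hswap := integral_integral_swap hint
  have hL : ∫ r, (∫ u, f r u ∂μ) ∂μ
      = ∫ r in Ioc 0 s, abel (1-a) (s-r) * conv (abel a) y' r := by
    refine setIntegral_congr_fun measurableSet_Ioc (fun r hr => ?_)
    have hind : (fun u => f r u)
        = (Iio r).indicator (fun u => abel (1-a) (s-r) * (abel a (r-u) * y' u)) := by
      funext u
      simp only [hf, hg, Set.indicator_apply, mem_Iio]
      split_ifs with h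
      · ring
      · exact (zero_mul _)
    rw [hind, hμ, setIntegral_indicator measurableSet_Iio,
      show Ioc 0 s ∩ Iio r = Ioo 0 r by
        ext x; simp only [mem_inter_iff, mem_Ioc, mem_Ioo, mem_Iio]
        constructor
        · rintro ⟨⟨h1, _⟩, h3⟩; exact ⟨h1, h3⟩
        · rintro ⟨h1, h2⟩; exact ⟨⟨h1, (h2.trans_le hr.2).le⟩, h2⟩,
      ← MeasureTheory.integral_Ioc_eq_integral_Ioo, MeasureTheory.integral_const_mul]
    rfl
  have hR : ∫ u, (∫ r, f r u ∂μ) ∂μ = ∫ u in Ioc 0 s, y' u := by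
    refine integral_congr_ae ?_
    filter_upwards [haeIoo] with u hu
    simp only [hf]
    rw [MeasureTheory.integral_mul_const, hgint u hu, one_mul]
  rw [← hR, ← hswap, hL]

/-- Quantitative form of Lemma 2.2: for `α ∈ (0,1)` and `y` absolutely continuous
with `g_{α/2} ∗ y' ∈ L²(0,t)`, for every `s ∈ [0,t]`,
`|y(s) − y(0)| ≤ s^{(1−α)/2} / (Γ(1−α/2) √(1−α)) ‖g_{α/2} ∗ y'‖_{L²(0,s)}`, and in
particular the sup over `[0,t]` is bounded by the corresponding `t`-based quantity. -/
theorem sup_bound_by_fractional_integral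
    (α t : ℝ) (hα : α ∈ Set.Ioo (0:ℝ) 1) (ht : 0 < t) (y y' : ℝ → ℝ)
    (hy'int : IntegrableOn y' (Set.Ioc 0 t))
    (hconvL2 : MemLp (conv (abel (α/2)) y') 2 (volume.restrict (Set.Ioc 0 t)))
    (hftc : ∀ s ∈ Set.Icc (0:ℝ) t, y s = y 0 + ∫ r in Set.Ioc 0 s, y' r) :
    (∀ s ∈ Set.Icc (0:ℝ) t,
      |y s - y 0| ≤ s ^ ((1 - α)/2) / (Real.Gamma (1 - α/2) * Real.sqrt (1 - α)) *
        Real.sqrt (∫ r in Set.Ioc 0 s, (conv (abel (α/2)) y' r)^2)) ∧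
    (∀ s ∈ Set.Icc (0:ℝ) t,
      |y s - y 0| ≤ t ^ ((1 - α)/2) / (Real.Gamma (1 - α/2) * Real.sqrt (1 - α)) *
        Real.sqrt (∫ r in Set.Ioc 0 t, (conv (abel (α/2)) y' r)^2)) := by
  obtain ⟨hα0, hα1⟩ := hα
  have ha : 0 < α/2 := by linarith
  have ha1 : α/2 < 1 := by linarith
  have h2a : 2*(α/2) < 1 := by linarith
  have hG : 0 < Real.Gamma (1 - α/2) := Real.Gamma_pos_of_pos (by linarith)
  have h1α : 0 < 1 - α := by linarith
  have hCpos : 0 < Real.Gamma (1 - α/2) * Real.sqrt (1 - α) :=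
    mul_pos hG (Real.sqrt_pos.mpr h1α)
  set F : ℝ → ℝ := conv (abel (α/2)) y' with hFdef
  have main : ∀ s ∈ Icc (0:ℝ) t,
      |y s - y 0| ≤ s ^ ((1 - α)/2) / (Real.Gamma (1 - α/2) * Real.sqrt (1 - α)) *
        Real.sqrt (∫ r in Ioc 0 s, (F r)^2) := by
    intro s hs
    rcases eq_or_lt_of_le hs.1 with hs0 | hspos
    · rw [← hs0, sub_self, abs_zero]
      exact mul_nonneg (div_nonneg (Real.rpow_nonneg le_rfl _) hCpos.le) (Real.sqrt_nonneg _)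
    · have hy's : IntegrableOn y' (Ioc 0 s) := hy'int.mono_set (Ioc_subset_Ioc_right hs.2)
      have hid := key_identity ha ha1 hspos hy's
      have hys : y s - y 0 = ∫ r in Ioc 0 s, y' r := by rw [hftc s hs]; ring
      set μ : Measure ℝ := volume.restrict (Ioc 0 s) with hμ
      have hFs : MemLp F 2 μ :=
        hconvL2.mono_measure (Measure.restrict_mono (Ioc_subset_Ioc_right hs.2) le_rfl)
      set K : ℝ → ℝ := fun r => abel (1-α/2) (s-r) with hK
      have hKmeas : AEStronglyMeasurable K μ := by
        have : Measurable K := by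
          simp only [hK, abel]
          exact ((measurable_rpow_const _).comp (measurable_const.sub measurable_id)).div_const _
        exact this.aestronglyMeasurable
      have hKsq : Integrable (fun r => (K r)^2) μ := Ksq_integrableOn ha h2a hspos
      have hKs : MemLp K 2 μ := (memLp_two_iff_integrable_sq hKmeas).mpr hKsq
      have hconj : Real.HolderConjugate 2 2 := Real.HolderConjugate.two_two
      have h2 : (ENNReal.ofReal (2:ℝ)) = 2 := by norm_num
      have hCS := MeasureTheory.integral_mul_norm_le_Lp_mul_Lq hconj (h2 ▸ hKs) (h2 ▸ hFs)
      have hnorm2 : ∀ x : ℝ, ‖x‖ ^ (2:ℝ) = x^2 := fun x => by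
        rw [Real.norm_eq_abs, show (2:ℝ) = ((2:ℕ):ℝ) by norm_num, Real.rpow_natCast, sq_abs]
      calc |y s - y 0| = |∫ r, K r * F r ∂μ| := by rw [hys, hid]
        _ ≤ ∫ r, ‖K r * F r‖ ∂μ := by
            rw [← Real.norm_eq_abs]; exact norm_integral_le_integral_norm _
        _ = ∫ r, ‖K r‖ * ‖F r‖ ∂μ := by simp_rw [norm_mul]
        _ ≤ (∫ r, ‖K r‖^(2:ℝ) ∂μ)^(1/2:ℝ) * (∫ r, ‖F r‖^(2:ℝ) ∂μ)^(1/2:ℝ) := hCS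
        _ = Real.sqrt (∫ r, (K r)^2 ∂μ) * Real.sqrt (∫ r, (F r)^2 ∂μ) := by
            simp_rw [hnorm2]
            rw [Real.sqrt_eq_rpow, Real.sqrt_eq_rpow]
        _ = s ^ ((1 - α)/2) / (Real.Gamma (1 - α/2) * Real.sqrt (1 - α)) *
              Real.sqrt (∫ r in Ioc 0 s, (F r)^2) := by
            congr 1
            rw [hμ] at *
            rw [show (∫ r in Ioc 0 s, (K r)^2) = s ^ (1-2*(α/2)) / ((1-2*(α/2)) *
              (Real.Gamma (1-α/2))^2) from Ksq_integral ha h2a hspos]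
            rw [show 1-2*(α/2) = 1-α by ring]
            rw [Real.sqrt_div (Real.rpow_nonneg (le_of_lt hspos) _) _]
            rw [show s ^ (1-α) = (s ^ ((1-α)/2))^2 by
              rw [← Real.rpow_natCast (s ^ ((1-α)/2)) 2, ← Real.rpow_mul hspos.le]; norm_num]
            rw [Real.sqrt_sq (Real.rpow_nonneg hspos.le _),
              Real.sqrt_mul h1α.le, Real.sqrt_sq hG.le]
            rw [mul_comm (Real.sqrt (1-α))]
  refine ⟨main, fun s hs => ?_⟩
  have hF2t : Integrable (fun r => (F r)^2) (volume.restrict (Ioc 0 t)) := hconvL2.integrable_sq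
  have hmono : (∫ r in Ioc 0 s, (F r)^2) ≤ ∫ r in Ioc 0 t, (F r)^2 :=
    setIntegral_mono_set hF2t (Filter.Eventually.of_forall (fun r => sq_nonneg _))
      ((Ioc_subset_Ioc_right hs.2).eventuallyLE)
  refine le_trans (main s hs) ?_
  refine mul_le_mul ?_ (Real.sqrt_le_sqrt hmono) (Real.sqrt_nonneg _) ?_
  · exact (div_le_div_iff_of_pos_right hCpos).mpr (Real.rpow_le_rpow hs.1 hs.2 (by linarith))
  · exact div_nonneg (Real.rpow_nonneg (hs.1.trans hs.2) _) hCpos.le
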